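/- Fix indices m, l ∈ {1, 2} and define ḡ : ℝ² → ℝ by ḡ(x) = x_m · x_l. For every w > 0 there exists a constant A > 0 (depending only on w) such that for all η > 0 and all x, y, z ∈ ℝ²: |ḡ(x + y + z)·1_{{‖x+y+z‖ ≤ η}} − ḡ(x)| ≤ w·‖x‖² + A·((‖x‖⁴ + ‖y‖⁴)/η² + ‖y‖² + min(‖z‖², η²)). -/
import Mathlib

lemma coord_abs_le_norm (u : EuclideanSpace ℝ (Fin 2)) (i : Fin 2) : |u i| ≤ ‖u‖ := by
  rw [EuclideanSpace.norm_eq, ← Real.sqrt_sq_eq_abs]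
  apply Real.sqrt_le_sqrt
  have : u i ^ 2 = ‖u i‖ ^ 2 := by rw [Real.norm_eq_abs, sq_abs]
  rw [this]
  exact Finset.single_le_sum (f := fun j => ‖u j‖ ^ 2) (fun j _ => sq_nonneg _)
    (Finset.mem_univ i)

set_option maxHeartbeats 2000000 in
/-- Fix coordinate indices `m, l` of `ℝ²` and let `ḡ(x) = x_m · x_l`. For every `w > 0` there is
a constant `A > 0` depending only on `w` such that for all `η > 0` and all `x, y, z ∈ ℝ²`:
`|ḡ(x+y+z)·1_{‖x+y+z‖ ≤ η} − ḡ(x)| ≤ w·‖x‖² + A·((‖x‖⁴ + ‖y‖⁴)/η² + ‖y‖² + min(‖z‖², η²))`. -/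
theorem truncated_product_increment_bound (m l : Fin 2) (w : ℝ) (hw : 0 < w) :
    ∃ A : ℝ, 0 < A ∧ ∀ (η : ℝ), 0 < η → ∀ x y z : EuclideanSpace ℝ (Fin 2),
      |(if ‖x + y + z‖ ≤ η then (x + y + z) m * (x + y + z) l else 0) - x m * x l| ≤
        w * ‖x‖ ^ 2 +
          A * ((‖x‖ ^ 4 + ‖y‖ ^ 4) / η ^ 2 + ‖y‖ ^ 2 + min (‖z‖ ^ 2) (η ^ 2)) := by
  refine ⟨9 + 9 / w, by positivity, fun η hη x y z => ?_⟩
  set S := x + y + z with hS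
  set a := ‖x‖ with ha
  set b := ‖y‖ with hb
  set c := ‖z‖ with hc
  set D := (a ^ 4 + b ^ 4) / η ^ 2 with hD
  set M := min (c ^ 2) (η ^ 2) with hM
  have ha0 : 0 ≤ a := norm_nonneg _
  have hb0 : 0 ≤ b := norm_nonneg _
  have hc0 : 0 ≤ c := norm_nonneg _
  have hSm : |S m| ≤ ‖S‖ := coord_abs_le_norm S m
  have hSl : |S l| ≤ ‖S‖ := coord_abs_le_norm S l
  have hxm : |x m| ≤ a := coord_abs_le_norm x m
  have hxl : |x l| ≤ a := coord_abs_le_norm x l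
  have hyzm : |S m - x m| ≤ b + c := by
    have h : S m - x m = y m + z m := by simp [hS]; ring
    rw [h]
    calc |y m + z m| ≤ |y m| + |z m| := abs_add_le _ _
      _ ≤ b + c := add_le_add (coord_abs_le_norm y m) (coord_abs_le_norm z m)
  have hyzl : |S l - x l| ≤ b + c := by
    have h : S l - x l = y l + z l := by simp [hS]; ring
    rw [h]
    calc |y l + z l| ≤ |y l| + |z l| := abs_add_le _ _
      _ ≤ b + c := add_le_add (coord_abs_le_norm y l) (coord_abs_le_norm z l)
  have hStri : ‖S‖ ≤ a + b + c := by
    calc ‖S‖ ≤ ‖x + y‖ + ‖z‖ := norm_add_le _ _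
      _ ≤ a + b + c := by have := norm_add_le x y; linarith
  have hGx : |x m * x l| ≤ a ^ 2 := by
    rw [abs_mul, sq]
    exact mul_le_mul hxm hxl (abs_nonneg _) ha0
  have hb4 : (0:ℝ) ≤ b ^ 4 := by positivity
  have ha4 : (0:ℝ) ≤ a ^ 4 := by positivity
  -- key AM-GM fact: 2 a² - η² ≤ D
  have hkey : 2 * a ^ 2 - η ^ 2 ≤ D := by
    rw [hD, le_div_iff₀ (by positivity)]
    nlinarith [sq_nonneg (a ^ 2 - η ^ 2)]
  have hD0 : (0:ℝ) ≤ D := by rw [hD]; positivity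
  have hM0 : (0:ℝ) ≤ M := le_min (sq_nonneg _) (sq_nonneg _)
  have hwa : (0:ℝ) ≤ w * a ^ 2 := by positivity
  have hwD : (0:ℝ) ≤ 9 / w * D := mul_nonneg (by positivity) hD0
  have hwb : (0:ℝ) ≤ 9 / w * b ^ 2 := by positivity
  have hwM : (0:ℝ) ≤ 9 / w * M := mul_nonneg (by positivity) hM0
  have hexp : w * a ^ 2 + (9 + 9 / w) * (D + b ^ 2 + M)
      = w * a ^ 2 + 9 * D + 9 * b ^ 2 + 9 * M + 9 / w * D + 9 / w * b ^ 2 + 9 / w * M := by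
    ring
  rw [hexp]
  by_cases hind : ‖S‖ ≤ η
  · rw [if_pos hind]
    have hdiff : |S m * S l - x m * x l| ≤ (b + c) * (‖S‖ + a) := by
      have h : S m * S l - x m * x l = (S m - x m) * S l + x m * (S l - x l) := by ring
      rw [h]
      calc |(S m - x m) * S l + x m * (S l - x l)|
          ≤ |(S m - x m) * S l| + |x m * (S l - x l)| := abs_add_le _ _
        _ = |S m - x m| * |S l| + |x m| * |S l - x l| := by rw [abs_mul, abs_mul]
        _ ≤ (b + c) * ‖S‖ + a * (b + c) :=
            add_le_add (mul_le_mul hyzm hSl (abs_nonneg _) (by linarith))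
              (mul_le_mul hxm hyzl (abs_nonneg _) ha0)
        _ = (b + c) * (‖S‖ + a) := by ring
    by_cases hcη : c ≤ η
    · -- M = c²
      have hMc : M = c ^ 2 := min_eq_left (by nlinarith)
      rw [hMc]
      have h1 : |S m * S l - x m * x l| ≤ (b + c) * (2 * a + b + c) := by
        refine hdiff.trans ?_
        have h2 : ‖S‖ + a ≤ 2 * a + b + c := by linarith
        exact mul_le_mul_of_nonneg_left h2 (by linarith)
      -- AM-GM: 2a(b+c) ≤ w a² + (b+c)²/w
      have hAM : 2 * a * (b + c) ≤ w * a ^ 2 + (b + c) ^ 2 / w := by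
        have h := sq_nonneg (w * a - (b + c))
        have h' : 0 ≤ (w * a - (b + c)) ^ 2 / w := div_nonneg h hw.le
        have e : (w * a - (b + c)) ^ 2 / w
            = w * a ^ 2 - 2 * a * (b + c) + (b + c) ^ 2 / w := by
          field_simp; ring
        linarith [e ▸ h']
      have hbc2 : (b + c) ^ 2 ≤ 2 * b ^ 2 + 2 * c ^ 2 := by nlinarith [sq_nonneg (b - c)]
      have hbc2w : (b + c) ^ 2 / w ≤ 9 / w * b ^ 2 + 9 / w * c ^ 2 := by
        rw [div_le_iff₀ hw]
        have e : (9 / w * b ^ 2 + 9 / w * c ^ 2) * w = 9 * b ^ 2 + 9 * c ^ 2 := by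
          field_simp
        rw [e]
        nlinarith [sq_nonneg (b - c), sq_nonneg b, sq_nonneg c]
      have hwc : (0:ℝ) ≤ 9 / w * c ^ 2 := by positivity
      nlinarith [h1, hAM, hbc2w, hbc2, hD0, hwD, sq_nonneg b, sq_nonneg c]
    · -- c > η, M = η²
      push_neg at hcη
      have hMη : M = η ^ 2 := min_eq_right (by nlinarith)
      rw [hMη]
      have hGS : |S m * S l| ≤ η ^ 2 := by
        have h1 : |S m * S l| ≤ ‖S‖ ^ 2 := by
          rw [abs_mul, sq]
          exact mul_le_mul hSm hSl (abs_nonneg _) (norm_nonneg _)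
        nlinarith [norm_nonneg S]
      have h1 : |S m * S l - x m * x l| ≤ η ^ 2 + a ^ 2 :=
        (abs_sub _ _).trans (add_le_add hGS hGx)
      have hwη : (0:ℝ) ≤ 9 / w * η ^ 2 := by positivity
      linarith [h1, hkey, hD0, hwa, hwD, hwb, hwη, sq_nonneg b, sq_nonneg η]
  · rw [if_neg hind, zero_sub, abs_neg]
    push_neg at hind
    have habc : η < a + b + c := lt_of_lt_of_le hind hStri
    by_cases haη : η / 3 ≤ a
    · have hη2 : η ^ 2 ≤ 9 * a ^ 2 := by nlinarith
      have h1 : a ^ 2 ≤ 9 * D := by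
        rw [hD, show (9:ℝ) * ((a ^ 4 + b ^ 4) / η ^ 2) = 9 * (a ^ 4 + b ^ 4) / η ^ 2 from
          (mul_div_assoc _ _ _).symm, le_div_iff₀ (by positivity)]
        nlinarith [mul_le_mul_of_nonneg_left hη2 (sq_nonneg a)]
      linarith [hGx, h1, hwa, hwD, hwb, hwM, hD0, hM0, sq_nonneg b]
    · push_neg at haη
      by_cases hbη : η / 3 ≤ b
      · have hη2 : η ^ 2 ≤ 9 * b ^ 2 := by nlinarith
        linarith [hGx, hkey, hwa, hwD, hwb, hwM, hD0, hM0, sq_nonneg b]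
      · push_neg at hbη
        have hcη : η / 3 < c := by linarith
        have hMge : η ^ 2 ≤ 9 * M := by
          have h9 : η ^ 2 / 9 ≤ M := le_min (by nlinarith) (by nlinarith)
          linarith
        linarith [hGx, hkey, hwa, hwD, hwb, hwM, hD0, hM0, sq_nonneg b]
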